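/- Fix i and dimensions m_j for j = 1,…,i, and set m = m₁m₂⋯m_i. Let A_j be invertible m_j×m_j real matrices, K the multiway Kronecker product matrix with entries K(q,r) = ∏_j (A_j)_{q_j r_j}, and M̃ ∈ (∏_j Fin m_j) → ℝ a constant array. Let Z̃ have the array variate standard normal law, i.e., the product over all coordinates of the standard Gaussian measure N(0,1) on ℝ, whose density is z ↦ exp(−‖z‖²/2)/(2π)^{m/2} where ‖z‖² = ∑_r z(r)². Then the law of X̃ = K *ᵥ Z̃ + M̃ has density with respect to Lebesgue measure x ↦ exp(−‖K⁻¹ *ᵥ (x − M̃)‖²/2) / ((2π)^{m/2} ∏_{j=1}^{i} |det A_j|^{∏_{k≠j} m_k}). -/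

import Mathlib

open Matrix MeasureTheory Real Kronecker
open scoped ENNReal

/-- The multiway Kronecker product of the square matrices `A j : Matrix (Fin (m j)) (Fin (m j)) ℝ`,
`j = 1, …, i`: the square matrix indexed by `∀ j, Fin (m j)` with entries
`K(q, r) = ∏ j, (A j)_{q_j r_j}`. -/
def multiwayKron {i : ℕ} {m : Fin i → ℕ}
    (A : ∀ j, Matrix (Fin (m j)) (Fin (m j)) ℝ) :
    Matrix (∀ j, Fin (m j)) (∀ j, Fin (m j)) ℝ :=
  Matrix.of fun q r => ∏ j, A j (q j) (r j)

lemma erase_zero_eq (i : ℕ) : (Finset.univ : Finset (Fin (i+1))).erase 0 =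
    Finset.univ.image Fin.succ := by
  ext k
  induction k using Fin.cases <;>
    simp [Fin.succ_ne_zero, (Fin.succ_ne_zero _).symm, eq_comm]

lemma erase_succ_eq (i : ℕ) (j : Fin i) :
    (Finset.univ : Finset (Fin (i+1))).erase j.succ =
      insert (0 : Fin (i+1)) ((Finset.univ.erase j).image Fin.succ) := by
  ext k
  induction k using Fin.cases <;>
    simp [Fin.succ_ne_zero, (Fin.succ_ne_zero _).symm, Fin.succ_injective _ |>.eq_iff, eq_comm]

lemma multiwayKron_det : ∀ {i : ℕ} {m : Fin i → ℕ} (A : ∀ j, Matrix (Fin (m j)) (Fin (m j)) ℝ),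
    (multiwayKron A).det = ∏ j, (A j).det ^ ∏ k ∈ Finset.univ.erase j, m k := by
  intro i
  induction i with
  | zero => intro m A; simp [multiwayKron, Matrix.det_unique]
  | succ i ih =>
    intro m A
    have key : multiwayKron A =
        Matrix.reindex (Fin.consEquiv (fun j => Fin (m j))) (Fin.consEquiv _)
          ((A 0) ⊗ₖ multiwayKron (fun j : Fin i => A j.succ)) := by
      ext q r
      simp [multiwayKron, Matrix.reindex_apply, Fin.consEquiv, kroneckerMap,
        Fin.prod_univ_succ, Fin.tail]
    rw [key, Matrix.det_reindex_self, Matrix.det_kronecker, ih]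
    rw [Fin.prod_univ_succ]
    congr 1
    · congr 1
      rw [erase_zero_eq, Finset.prod_image (by simp [Fin.succ_injective _ |>.eq_iff]; exact Fin.succ_injective _)]
      simp [Fintype.card_pi]
    · rw [← Finset.prod_pow]
      apply Finset.prod_congr rfl
      intro j _
      rw [← pow_mul, erase_succ_eq, Finset.prod_insert (by simp [Fin.succ_ne_zero]),
        Finset.prod_image (by simp [Fin.succ_injective _ |>.eq_iff])]
      simp [Fintype.card_fin]
      ring

lemma map_withDensity_measurableEquiv {α β : Type*} [MeasurableSpace α] [MeasurableSpace β]
    (μ : Measure α) (e : α ≃ᵐ β) {f : α → ℝ≥0∞} (hf : Measurable f) :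
    (μ.withDensity f).map e = (μ.map e).withDensity (fun x => f (e.symm x)) := by
  ext s hs
  rw [Measure.map_apply e.measurable hs, withDensity_apply _ (e.measurable hs),
    withDensity_apply _ hs,
    setLIntegral_map (f := fun x => f (e.symm x)) hs (hf.comp e.symm.measurable) e.measurable]
  simp

/-- If `Z̃` has the array variate standard normal law, with density
`z ↦ exp(−‖z‖²/2)/(2π)^{m/2}` where `m = m₁⋯m_i` and `‖z‖² = ∑ r, z(r)²`, then the law of
`X̃ = K *ᵥ Z̃ + M̃`, where `K` is the multiway Kronecker product of the invertible matrices
`A j`, has Lebesgue density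
`x ↦ exp(−‖K⁻¹ *ᵥ (x − M̃)‖²/2) / ((2π)^{m/2} ∏ j, |det (A j)|^{∏_{k ≠ j} m k})`. -/
theorem arrayVariate_normal_density {i : ℕ} {m : Fin i → ℕ}
    (A : ∀ j, Matrix (Fin (m j)) (Fin (m j)) ℝ) (hA : ∀ j, IsUnit (A j))
    (M : (∀ j, Fin (m j)) → ℝ) :
    (volume.withDensity fun z : (∀ j, Fin (m j)) → ℝ =>
          ENNReal.ofReal
            (Real.exp (-(∑ r, z r ^ 2) / 2) /
              (2 * π) ^ ((∏ j, m j : ℕ) / 2 : ℝ))).map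
        (fun z => multiwayKron A *ᵥ z + M) =
      volume.withDensity fun x =>
        ENNReal.ofReal
          (Real.exp (-(∑ r, ((multiwayKron A)⁻¹ *ᵥ (x - M)) r ^ 2) / 2) /
            ((2 * π) ^ ((∏ j, m j : ℕ) / 2 : ℝ) *
              ∏ j, |(A j).det| ^ ∏ k ∈ Finset.univ.erase j, m k)) := by
  set K := multiwayKron A with hK
  have hdetA : ∀ j, (A j).det ≠ 0 := fun j =>
    (Matrix.isUnit_iff_isUnit_det _ |>.mp (hA j)).ne_zero
  have hdet : K.det ≠ 0 := by
    rw [hK, multiwayKron_det]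
    exact Finset.prod_ne_zero_iff.mpr fun j _ => pow_ne_zero _ (hdetA j)
  have hdetU : IsUnit K.det := isUnit_iff_ne_zero.mpr hdet
  have habs : |K.det| = ∏ j, |(A j).det| ^ ∏ k ∈ Finset.univ.erase j, m k := by
    rw [hK, multiwayKron_det, Finset.abs_prod]
    simp [abs_pow]
  -- measurable equiv
  have hmulVec : Measurable fun z : (∀ j, Fin (m j)) → ℝ => K *ᵥ z := by
    have : Continuous fun z : (∀ j, Fin (m j)) → ℝ => K *ᵥ z := by
      simpa [Matrix.toLin'_apply', Matrix.coe_mulVecLin] using (Matrix.toLin' K).continuous_of_finiteDimensional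
    exact this.measurable
  have hmulVecInv : Measurable fun x : (∀ j, Fin (m j)) → ℝ => K⁻¹ *ᵥ (x - M) := by
    have : Continuous fun x : (∀ j, Fin (m j)) → ℝ => K⁻¹ *ᵥ (x - M) := by
      have := (Matrix.toLin' K⁻¹).continuous_of_finiteDimensional
      simp only [Matrix.toLin'_apply', Matrix.coe_mulVecLin] at this
      exact this.comp (continuous_id.sub continuous_const)
    exact this.measurable
  let e : ((∀ j, Fin (m j)) → ℝ) ≃ᵐ ((∀ j, Fin (m j)) → ℝ) :=
    { toFun := fun z => K *ᵥ z + M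
      invFun := fun x => K⁻¹ *ᵥ (x - M)
      left_inv := fun z => by
        simp [Matrix.mulVec_mulVec, Matrix.nonsing_inv_mul K hdetU]
      right_inv := fun x => by
        simp [Matrix.mulVec_mulVec, Matrix.mul_nonsing_inv K hdetU]
      measurable_toFun := hmulVec.add_const M
      measurable_invFun := hmulVecInv }
  set f : ((∀ j, Fin (m j)) → ℝ) → ℝ≥0∞ := fun z =>
    ENNReal.ofReal (Real.exp (-(∑ r, z r ^ 2) / 2) / (2 * π) ^ ((∏ j, m j : ℕ) / 2 : ℝ))
    with hf
  have hfm : Measurable f := by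
    apply Measurable.ennreal_ofReal
    fun_prop
  have hmap : Measure.map (fun z : (∀ j, Fin (m j)) → ℝ => K *ᵥ z + M) volume
      = ENNReal.ofReal |(K.det)⁻¹| • volume := by
    have h1 : (fun z : (∀ j, Fin (m j)) → ℝ => K *ᵥ z + M)
        = (fun x => x + M) ∘ (fun z => K *ᵥ z) := rfl
    rw [h1, ← Measure.map_map (measurable_add_const M) hmulVec]
    have h2 : (fun z : (∀ j, Fin (m j)) → ℝ => K *ᵥ z) = ⇑(Matrix.toLin' K) := by
      funext z; simp [Matrix.toLin'_apply]
    rw [h2, Real.map_matrix_volume_pi_eq_smul_volume_pi hdet, Measure.map_smul,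
      map_add_right_eq_self volume M]
  have hcoe : (fun z : (∀ j, Fin (m j)) → ℝ => K *ᵥ z + M) = ⇑e := rfl
  rw [hcoe, map_withDensity_measurableEquiv volume e hfm, ← hcoe, hmap,
    withDensity_smul_measure, ← withDensity_smul' _ _ ENNReal.ofReal_ne_top]
  congr 1
  funext x
  have hsymm : e.symm x = K⁻¹ *ᵥ (x - M) := rfl
  simp only [Pi.smul_apply, smul_eq_mul, hsymm, hf]
  rw [← ENNReal.ofReal_mul (abs_nonneg _)]
  congr 1
  rw [abs_inv, habs]
  have hP : (0:ℝ) < (2 * π) ^ ((∏ j, m j : ℕ) / 2 : ℝ) :=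
    Real.rpow_pos_of_pos (by positivity) _
  have hD : (0:ℝ) < ∏ j, |(A j).det| ^ ∏ k ∈ Finset.univ.erase j, m k := by
    rw [← habs]; exact abs_pos.mpr hdet
  field_simp
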